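/- Suppose Q : ℝⁿ → Matrix (Fin m) (Fin m) ℝ is a conservative Q-matrix field admitting a family of invariant distributions μ^x and uniformly exponentially ergodic. Let F : ℝⁿ × Fin m → ℝⁿ, and suppose Φ₁, Φ₂ : ℝⁿ × Fin m → ℝⁿ both satisfy −(Q(x) Φ(x,·))(i) = F(x,i) for all x and i (componentwise) together with the centering condition Σᵢ Φ(x,i) μ^x_i = 0 for all x. Then Φ₁ = Φ₂. In particular, for each fixed x, any v : Fin m → ℝ with Q(x) v = 0 is constant. -/

import Mathlib

open MeasureTheory

noncomputable section

open NormedSpace in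
private lemma exp_mulVec_fixed' {m : ℕ} (M : Matrix (Fin m) (Fin m) ℝ) (v : Fin m → ℝ)
    (hv : M.mulVec v = 0) : (exp M).mulVec v = v := by
  letI : SeminormedRing (Matrix (Fin m) (Fin m) ℝ) := Matrix.linftyOpSemiNormedRing
  letI : NormedRing (Matrix (Fin m) (Fin m) ℝ) := Matrix.linftyOpNormedRing
  letI : NormedAlgebra ℝ (Matrix (Fin m) (Fin m) ℝ) := Matrix.linftyOpNormedAlgebra
  have hsum : Summable (fun k : ℕ => ((k.factorial : ℝ))⁻¹ • M ^ k) :=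
    NormedSpace.expSeries_summable' M
  let f : Matrix (Fin m) (Fin m) ℝ →ₗ[ℝ] (Fin m → ℝ) :=
    { toFun := fun A => A.mulVec v
      map_add' := fun A B => Matrix.add_mulVec A B v
      map_smul' := fun c A => Matrix.smul_mulVec c A v }
  have hf : Continuous f := LinearMap.continuous_of_finiteDimensional f
  have hmap := ContinuousLinearMap.map_tsum
    (⟨f, hf⟩ : Matrix (Fin m) (Fin m) ℝ →L[ℝ] (Fin m → ℝ)) hsum
  have hterm : ∀ k : ℕ, ((k.factorial : ℝ))⁻¹ • (M ^ k).mulVec v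
      = if k = 0 then v else 0 := by
    intro k
    cases k with
    | zero => simp [Matrix.one_mulVec]
    | succ k =>
      simp only [Nat.succ_ne_zero, if_false, pow_succ, ← Matrix.mulVec_mulVec, hv,
        Matrix.mulVec_zero, smul_zero]
  rw [NormedSpace.exp_eq_tsum ℝ]
  calc (∑' k : ℕ, ((k.factorial : ℝ))⁻¹ • M ^ k).mulVec v
      = ∑' k : ℕ, ((k.factorial : ℝ))⁻¹ • (M ^ k).mulVec v := by
        simpa [f, Matrix.smul_mulVec] using hmap
    _ = ∑' k : ℕ, (if k = 0 then v else 0) := by simp_rw [hterm]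
    _ = v := by rw [tsum_eq_single 0 (by intro b hb; simp [hb])]; simp

/-- Uniqueness of centered solutions of the Poisson equation associated with a
conservative, uniformly exponentially ergodic `Q`-matrix field: two solutions of
`−Q(x)Φ(x,·)(i) = F(x,i)` that are both centered under `μ^x` coincide; in particular,
for each fixed `x`, any `v` with `Q(x)v = 0` is constant. -/
theorem poisson_solution_unique {n m : ℕ} (C₀ lam : ℝ) (hC₀ : 0 < C₀) (hlam : 0 < lam)
    (Q : EuclideanSpace ℝ (Fin n) → Matrix (Fin m) (Fin m) ℝ)
    (μ : EuclideanSpace ℝ (Fin n) → Fin m → ℝ)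
    (hQoff : ∀ x i j, i ≠ j → 0 ≤ Q x i j)
    (hQrow : ∀ x i, ∑ j, Q x i j = 0)
    (hμpos : ∀ x i, 0 < μ x i)
    (hμsum : ∀ x, ∑ i, μ x i = 1)
    (hμinv : ∀ x j, ∑ i, μ x i * Q x i j = 0)
    (herg : ∀ x i (t : ℝ), 0 ≤ t →
      ∑ j, |NormedSpace.exp (t • Q x) i j - μ x j| ≤ C₀ * Real.exp (-lam * t))
    (F Φ₁ Φ₂ : EuclideanSpace ℝ (Fin n) → Fin m → EuclideanSpace ℝ (Fin n))
    -- both Φ₁ and Φ₂ solve the Poisson equation (componentwise)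
    (hP₁ : ∀ x i (l : Fin n), -((Q x).mulVec (fun j => Φ₁ x j l) i) = F x i l)
    (hP₂ : ∀ x i (l : Fin n), -((Q x).mulVec (fun j => Φ₂ x j l) i) = F x i l)
    -- both are centered: Σᵢ Φ(x,i) μ^x_i = 0
    (hc₁ : ∀ x, ∑ i, μ x i • Φ₁ x i = 0)
    (hc₂ : ∀ x, ∑ i, μ x i • Φ₂ x i = 0) :
    Φ₁ = Φ₂ ∧
    ∀ (x : EuclideanSpace ℝ (Fin n)) (v : Fin m → ℝ),
      (Q x).mulVec v = 0 → ∀ i i', v i = v i' := by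
  -- Key claim: a vector in the kernel of `Q x` has all entries equal to its `μ x`-average.
  have key : ∀ x (v : Fin m → ℝ), (Q x).mulVec v = 0 → ∀ i, v i = ∑ j, μ x j * v j := by
    intro x v hv i
    set B : ℝ := ∑ j, |v j| with hB
    have hvB : ∀ j, |v j| ≤ B := fun j =>
      Finset.single_le_sum (f := fun j => |v j|) (fun k _ => abs_nonneg _) (Finset.mem_univ j)
    have hbound : ∀ t : ℝ, 0 ≤ t →
        |v i - ∑ j, μ x j * v j| ≤ (C₀ * B) * Real.exp (-lam * t) := by
      intro t ht
      have hfix : (NormedSpace.exp (t • Q x)).mulVec v = v := by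
        apply exp_mulVec_fixed'
        rw [Matrix.smul_mulVec, hv, smul_zero]
      have hvi : v i = ∑ j, NormedSpace.exp (t • Q x) i j * v j := by
        conv_lhs => rw [← hfix]
        rfl
      have h1 : v i - ∑ j, μ x j * v j
          = ∑ j, (NormedSpace.exp (t • Q x) i j - μ x j) * v j := by
        rw [hvi, ← Finset.sum_sub_distrib]
        congr 1; ext j; ring
      rw [h1]
      calc |∑ j, (NormedSpace.exp (t • Q x) i j - μ x j) * v j|
          ≤ ∑ j, |(NormedSpace.exp (t • Q x) i j - μ x j) * v j| :=
            Finset.abs_sum_le_sum_abs _ _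
        _ ≤ ∑ j, |NormedSpace.exp (t • Q x) i j - μ x j| * B := by
            apply Finset.sum_le_sum
            intro j _
            rw [abs_mul]
            exact mul_le_mul_of_nonneg_left (hvB j) (abs_nonneg _)
        _ = (∑ j, |NormedSpace.exp (t • Q x) i j - μ x j|) * B := by
            rw [Finset.sum_mul]
        _ ≤ (C₀ * Real.exp (-lam * t)) * B := by
            apply mul_le_mul_of_nonneg_right (herg x i t ht)
            exact Finset.sum_nonneg fun j _ => abs_nonneg _
        _ = (C₀ * B) * Real.exp (-lam * t) := by ring
    have hle0 : |v i - ∑ j, μ x j * v j| ≤ 0 := by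
      have h1 : Filter.Tendsto (fun t : ℝ => -lam * t) Filter.atTop Filter.atBot :=
        Filter.tendsto_id.const_mul_atTop_of_neg (neg_neg_iff_pos.mpr hlam)
      have h2 : Filter.Tendsto (fun t : ℝ => (C₀ * B) * Real.exp (-lam * t))
          Filter.atTop (nhds 0) := by
        have := (Real.tendsto_exp_atBot.comp h1).const_mul (C₀ * B)
        simpa using this
      exact ge_of_tendsto h2 (Filter.eventually_atTop.2 ⟨0, fun t ht => hbound t ht⟩)
    have := le_antisymm hle0 (abs_nonneg _)
    have := abs_eq_zero.mp this
    linarith [this]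
  constructor
  · funext x i
    ext l
    have hker : (Q x).mulVec (fun j => Φ₁ x j l - Φ₂ x j l) = 0 := by
      have h : ∀ i', (Q x).mulVec (fun j => Φ₁ x j l) i'
          = (Q x).mulVec (fun j => Φ₂ x j l) i' := by
        intro i'
        have := (hP₁ x i' l).trans (hP₂ x i' l).symm
        linarith [this]
      funext i'
      have hsub : (fun j => Φ₁ x j l - Φ₂ x j l)
          = (fun j => Φ₁ x j l) - (fun j => Φ₂ x j l) := rfl
      rw [hsub, Matrix.mulVec_sub]
      simp [h i']
    have havg := key x (fun j => Φ₁ x j l - Φ₂ x j l) hker i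
    have hz1 : ∑ j, μ x j * Φ₁ x j l = 0 := by
      have := congrArg (EuclideanSpace.proj l) (hc₁ x)
      rw [map_sum] at this
      simpa [PiLp.proj_apply] using this
    have hz2 : ∑ j, μ x j * Φ₂ x j l = 0 := by
      have := congrArg (EuclideanSpace.proj l) (hc₂ x)
      rw [map_sum] at this
      simpa [PiLp.proj_apply] using this
    have : ∑ j, μ x j * (Φ₁ x j l - Φ₂ x j l) = 0 := by
      simp only [mul_sub, Finset.sum_sub_distrib, hz1, hz2, sub_zero]
    rw [this] at havg
    linarith [havg]
  · intro x v hv i i'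
    rw [key x v hv i, key x v hv i']
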